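/- The class of all Kripke models has ULIP. -/

import Mathlib

/-- Modal formulas: propositional variables, ⊥, →, □. -/
inductive Formula : Type
  | var : ℕ → Formula
  | bot : Formula
  | imp : Formula → Formula → Formula
  | box : Formula → Formula
  deriving DecidableEq

namespace Formula

def neg (φ : Formula) : Formula := φ.imp bot

def top : Formula := neg bot

def and (φ ψ : Formula) : Formula := (φ.imp ψ.neg).neg

def iff (φ ψ : Formula) : Formula := (φ.imp ψ).and (ψ.imp φ)

def dia (φ : Formula) : Formula := φ.neg.box.neg

/-- Variables occurring positively (`true`) / negatively (`false`). -/
def vsgn : Formula → Bool → Finset ℕ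
  | var p, true => {p}
  | var _, false => ∅
  | bot, _ => ∅
  | imp φ ψ, b => vsgn φ (!b) ∪ vsgn ψ b
  | box φ, b => vsgn φ b

def vpos (φ : Formula) : Finset ℕ := vsgn φ true
def vneg (φ : Formula) : Finset ℕ := vsgn φ false
def vars (φ : Formula) : Finset ℕ := vpos φ ∪ vneg φ

/-- Modal depth. -/
def depth : Formula → ℕ
  | var _ => 0
  | bot => 0
  | imp φ ψ => max (depth φ) (depth ψ)
  | box φ => depth φ + 1

/-- Uniform substitution. -/
def subst (σ : ℕ → Formula) : Formula → Formula
  | var p => σ p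
  | bot => bot
  | imp φ ψ => (subst σ φ).imp (subst σ ψ)
  | box φ => (subst σ φ).box

/-- The set of subformulas. -/
def subfmls : Formula → Finset Formula
  | var p => {var p}
  | bot => {bot}
  | imp φ ψ => insert (imp φ ψ) (subfmls φ ∪ subfmls ψ)
  | box φ => insert (box φ) (subfmls φ)

/-- n(φ) = |{ψ : □ψ ∈ Sub(φ)}|. -/
def boxCount (φ : Formula) : ℕ :=
  ((subfmls φ).filter fun ψ => box ψ ∈ subfmls φ).card

/-- The translation ⋆ : p⋆ = p, ⊥⋆ = ⊥, (φ→ψ)⋆ = φ⋆→ψ⋆, (□φ)⋆ = φ⋆ ∧ □φ⋆. -/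
def star : Formula → Formula
  | var p => var p
  | bot => bot
  | imp φ ψ => (star φ).imp (star ψ)
  | box φ => (star φ).and (star φ).box

end Formula

/-- Propositional tautology: true under every valuation treating variables and
boxed formulas as atoms. -/
def Tautology (φ : Formula) : Prop :=
  ∀ v : Formula → Bool, v .bot = false →
    (∀ ψ θ : Formula, v (ψ.imp θ) = (!v ψ || v θ)) → v φ = true

/-- A normal modal logic: contains all tautologies and □(p→q)→(□p→□q), and is
closed under modus ponens, necessitation and uniform substitution. -/
structure IsNormal (L : Set Formula) : Prop where
  taut : ∀ φ, Tautology φ → φ ∈ L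
  axK : ((Formula.var 0).imp (Formula.var 1)).box.imp
      ((Formula.var 0).box.imp (Formula.var 1).box) ∈ L
  mp : ∀ φ ψ : Formula, φ.imp ψ ∈ L → φ ∈ L → ψ ∈ L
  nec : ∀ φ : Formula, φ ∈ L → φ.box ∈ L
  subst_mem : ∀ φ ∈ L, ∀ σ : ℕ → Formula, Formula.subst σ φ ∈ L

/-- The least normal modal logic including `X`. -/
def NormalExt (X : Set Formula) : Set Formula :=
  ⋂₀ {L : Set Formula | IsNormal L ∧ X ⊆ L}

/-- The least normal modal logic K. -/
def TheoryK : Set Formula := NormalExt ∅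

def axT : Formula := (Formula.var 0).box.imp (Formula.var 0)
def ax4 : Formula := (Formula.var 0).box.imp (Formula.var 0).box.box
def axB : Formula := (Formula.var 0).imp (Formula.var 0).dia.box
def axD : Formula := Formula.bot.box.neg
def axGL : Formula := ((Formula.var 0).box.imp (Formula.var 0)).box.imp (Formula.var 0).box
def axGrz : Formula :=
  (((Formula.var 0).imp (Formula.var 0).box).box.imp (Formula.var 0)).box.imp (Formula.var 0)

def TheoryKD : Set Formula := NormalExt {axD}
def TheoryKT : Set Formula := NormalExt {axT}
def TheoryKB : Set Formula := NormalExt {axB}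
def TheoryKDB : Set Formula := NormalExt {axD, axB}
def TheoryKTB : Set Formula := NormalExt {axT, axB}
def TheoryK4 : Set Formula := NormalExt {ax4}
def TheoryS4 : Set Formula := NormalExt {axT, ax4}
def TheoryGL : Set Formula := NormalExt {axGL}
def TheoryGrz : Set Formula := NormalExt {axGrz}

/-- L⋆ := {φ : L ⊢ φ⋆}. -/
def starLogic (L : Set Formula) : Set Formula := {φ | Formula.star φ ∈ L}

/-- θ is a uniform Lyndon interpolant of (φ, P, Q) in L. -/
def IsULInterpolant (L : Set Formula) (φ : Formula) (P Q : Finset ℕ) (θ : Formula) : Prop :=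
  θ.vpos ⊆ φ.vpos \ P ∧ θ.vneg ⊆ φ.vneg \ Q ∧ φ.imp θ ∈ L ∧
    ∀ ψ : Formula, ψ.vpos ∩ P = ∅ → ψ.vneg ∩ Q = ∅ → φ.imp ψ ∈ L → θ.imp ψ ∈ L

/-- The uniform Lyndon interpolation property. -/
def ULIP (L : Set Formula) : Prop :=
  ∀ (φ : Formula) (P Q : Finset ℕ), ∃ θ : Formula, IsULInterpolant L φ P Q θ

/-- The uniform interpolation property. -/
def UIP (L : Set Formula) : Prop :=
  ∀ (φ : Formula) (P : Finset ℕ), ∃ θ : Formula,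
    θ.vars ⊆ φ.vars \ P ∧ φ.imp θ ∈ L ∧
      ∀ ψ : Formula, ψ.vars ∩ P = ∅ → φ.imp ψ ∈ L → θ.imp ψ ∈ L

/-- The Lyndon interpolation property. -/
def LIP (L : Set Formula) : Prop :=
  ∀ φ ψ : Formula, φ.imp ψ ∈ L → ∃ θ : Formula,
    θ.vpos ⊆ φ.vpos ∩ ψ.vpos ∧ θ.vneg ⊆ φ.vneg ∩ ψ.vneg ∧
      φ.imp θ ∈ L ∧ θ.imp ψ ∈ L

/-- A Kripke model. -/
structure KripkeModel where
  W : Type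
  nonempty : Nonempty W
  rel : W → W → Prop
  val : W → ℕ → Prop

/-- Satisfaction in a Kripke model. -/
def KripkeModel.Sat (M : KripkeModel) : Formula → M.W → Prop
  | .var p, w => M.val w p
  | .bot, _ => False
  | .imp φ ψ, w => M.Sat φ w → M.Sat ψ w
  | .box φ, w => ∀ x, M.rel w x → M.Sat φ x

/-- A (P,Q)-formula: v⁺(φ) ⊆ P and v⁻(φ) ⊆ Q. -/
def PQFormula (P Q : Finset ℕ) (φ : Formula) : Prop := φ.vpos ⊆ P ∧ φ.vneg ⊆ Q

/-- `F n P Q` is a finite list of (P,Q)-formulas of modal depth ≤ n such that every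
(P,Q)-formula of modal depth ≤ n is K-provably equivalent to some member. -/
def IsFamily (F : ℕ → Finset ℕ → Finset ℕ → List Formula) : Prop :=
  ∀ (n : ℕ) (P Q : Finset ℕ),
    (∀ φ ∈ F n P Q, PQFormula P Q φ ∧ φ.depth ≤ n) ∧
    ∀ ψ : Formula, PQFormula P Q ψ → ψ.depth ≤ n →
      ∃ φ ∈ F n P Q, Formula.iff φ ψ ∈ TheoryK

/-- Th_n^{(P,Q)}(w) = {φ ∈ F_n^{(P,Q)} : w ⊩ φ}. -/
def Th (F : ℕ → Finset ℕ → Finset ℕ → List Formula) (M : KripkeModel)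
    (n : ℕ) (P Q : Finset ℕ) (w : M.W) : Set Formula :=
  {φ | φ ∈ F n P Q ∧ M.Sat φ w}

def conjList : List Formula → Formula
  | [] => Formula.top
  | φ :: l => φ.and (conjList l)

open Classical in
/-- C_n^{(P,Q)}(w) = ⋀ Th_n^{(P,Q)}(w). -/
noncomputable def Cfml (F : ℕ → Finset ℕ → Finset ℕ → List Formula) (M : KripkeModel)
    (n : ℕ) (P Q : Finset ℕ) (w : M.W) : Formula :=
  conjList ((F n P Q).filter fun φ => decide (M.Sat φ w))

/-- Layered (P,Q)-bisimulation between M and M'. -/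
def LayeredBisim (P Q : Finset ℕ) (M M' : KripkeModel)
    (Z : M.W → ℕ → M'.W → Prop) : Prop :=
  (∀ w n w', Z w n w' →
    (∀ p ∈ P, M.val w p → M'.val w' p) ∧ (∀ q ∈ Q, ¬M.val w q → ¬M'.val w' q)) ∧
  (∀ w n w', Z w (n + 1) w' → ∀ x, M.rel w x → ∃ x', M'.rel w' x' ∧ Z x n x') ∧
  (∀ w n w', Z w (n + 1) w' → ∀ x', M'.rel w' x' → ∃ x, M.rel w x ∧ Z x n x')

/-- Downward closedness of a layered bisimulation. -/
def DownClosed (M M' : KripkeModel) (Z : M.W → ℕ → M'.W → Prop) : Prop :=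
  ∀ w n w', Z w n w' → ∀ m ≤ n, Z w m w'

/-- A class of Kripke models has ULIP. -/
def ClassULIP (F : ℕ → Finset ℕ → Finset ℕ → List Formula) (Cl : Set KripkeModel) : Prop :=
  ∀ P1 P2 P3 Q1 Q2 Q3 : Finset ℕ,
    Disjoint P1 P2 → Disjoint P1 P3 → Disjoint P2 P3 →
    Disjoint Q1 Q2 → Disjoint Q1 Q3 → Disjoint Q2 Q3 →
    ∀ M : KripkeModel, M ∈ Cl → ∀ M' : KripkeModel, M' ∈ Cl →
    ∀ w : M.W, ∀ w' : M'.W, ∀ m n : ℕ,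
      Th F M n P2 Q2 w ⊆ Th F M' n P2 Q2 w' →
      ∃ Mst : KripkeModel, Mst ∈ Cl ∧ ∃ wst : Mst.W,
        Th F M n (P1 ∪ P2) (Q1 ∪ Q2) w ⊆ Th F Mst n (P1 ∪ P2) (Q1 ∪ Q2) wst ∧
        Th F Mst m (P2 ∪ P3) (Q2 ∪ Q3) wst ⊆ Th F M' m (P2 ∪ P3) (Q2 ∪ Q3) w'

/-! ### Auxiliary development -/

open Classical

namespace Formula

@[simp] lemma vsgn_neg (φ : Formula) (b : Bool) : (neg φ).vsgn b = φ.vsgn (!b) := by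
  simp [neg, vsgn]

@[simp] lemma vsgn_and (φ ψ : Formula) (b : Bool) :
    (Formula.and φ ψ).vsgn b = φ.vsgn b ∪ ψ.vsgn b := by
  cases b <;> simp [Formula.and, neg, vsgn]

@[simp] lemma vsgn_dia (φ : Formula) (b : Bool) : (dia φ).vsgn b = φ.vsgn b := by
  cases b <;> simp [dia, neg, vsgn]

@[simp] lemma vsgn_top (b : Bool) : (top : Formula).vsgn b = ∅ := by
  simp [top, neg, vsgn]

@[simp] lemma depth_neg (φ : Formula) : (neg φ).depth = φ.depth := by
  simp [neg, depth]

@[simp] lemma depth_and (φ ψ : Formula) : (Formula.and φ ψ).depth = max φ.depth ψ.depth := by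
  simp [Formula.and, neg, depth]

@[simp] lemma depth_dia (φ : Formula) : (dia φ).depth = φ.depth + 1 := by
  simp [dia, neg, depth]

@[simp] lemma depth_top : (top : Formula).depth = 0 := by simp [top, neg, depth]

/-- Disjunction of a list of formulas. -/
def disjList : List Formula → Formula
  | [] => Formula.bot
  | φ :: l => (φ.neg).imp (disjList l)

end Formula

namespace KripkeModel

lemma sat_neg (M : KripkeModel) (φ : Formula) (w : M.W) :
    M.Sat φ.neg w ↔ ¬ M.Sat φ w := by
  simp [Formula.neg, KripkeModel.Sat]

lemma sat_and (M : KripkeModel) (φ ψ : Formula) (w : M.W) :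
    M.Sat (φ.and ψ) w ↔ M.Sat φ w ∧ M.Sat ψ w := by
  simp only [Formula.and, Formula.neg, KripkeModel.Sat]
  tauto

lemma sat_dia (M : KripkeModel) (φ : Formula) (w : M.W) :
    M.Sat φ.dia w ↔ ∃ x, M.rel w x ∧ M.Sat φ x := by
  simp only [Formula.dia, Formula.neg, KripkeModel.Sat]
  constructor
  · intro h
    by_contra h2
    push_neg at h2
    exact h (fun x hx hs => h2 x hx hs)
  · rintro ⟨x, hx, hs⟩ h
    exact h x hx hs

lemma sat_conjList (M : KripkeModel) (l : List Formula) (w : M.W) :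
    M.Sat (conjList l) w ↔ ∀ φ ∈ l, M.Sat φ w := by
  induction l with
  | nil => simp [conjList, Formula.top, Formula.neg, KripkeModel.Sat]
  | cons φ l ih => simp [conjList, sat_and, ih]

lemma sat_disjList (M : KripkeModel) (l : List Formula) (w : M.W) :
    M.Sat (Formula.disjList l) w ↔ ∃ φ ∈ l, M.Sat φ w := by
  induction l with
  | nil => simp [Formula.disjList, KripkeModel.Sat]
  | cons φ l ih =>
      simp only [Formula.disjList, KripkeModel.Sat, sat_neg, ih, List.mem_cons]
      constructor
      · intro h
        by_cases hφ : M.Sat φ w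
        · exact ⟨φ, Or.inl rfl, hφ⟩
        · obtain ⟨ψ, hψ, hs⟩ := h hφ
          exact ⟨ψ, Or.inr hψ, hs⟩
      · rintro ⟨ψ, (rfl | hψ), hs⟩
        · intro hn; exact absurd hs hn
        · intro _; exact ⟨ψ, hψ, hs⟩

end KripkeModel

lemma vsgn_conjList_subset {l : List Formula} {S : Finset ℕ} {b : Bool}
    (h : ∀ φ ∈ l, φ.vsgn b ⊆ S) : (conjList l).vsgn b ⊆ S := by
  induction l with
  | nil => simp [conjList]
  | cons φ l ih =>
      simp only [conjList, Formula.vsgn_and]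
      exact Finset.union_subset (h φ (by simp)) (ih fun ψ hψ => h ψ (by simp [hψ]))

lemma depth_conjList_le {l : List Formula} {n : ℕ}
    (h : ∀ φ ∈ l, φ.depth ≤ n) : (conjList l).depth ≤ n := by
  induction l with
  | nil => simp [conjList]
  | cons φ l ih =>
      simp only [conjList, Formula.depth_and, sup_le_iff]
      exact ⟨h φ (by simp), ih fun ψ hψ => h ψ (by simp [hψ])⟩

lemma vsgn_disjList_subset {l : List Formula} {S : Finset ℕ} {b : Bool}
    (h : ∀ φ ∈ l, φ.vsgn b ⊆ S) : (Formula.disjList l).vsgn b ⊆ S := by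
  induction l with
  | nil => simp [Formula.disjList, Formula.vsgn]
  | cons φ l ih =>
      simp only [Formula.disjList, Formula.vsgn, Formula.vsgn_neg, Bool.not_not, Finset.union_empty]
      exact Finset.union_subset (h φ (by simp)) (ih fun ψ hψ => h ψ (by simp [hψ]))

lemma depth_disjList_le {l : List Formula} {n : ℕ}
    (h : ∀ φ ∈ l, φ.depth ≤ n) : (Formula.disjList l).depth ≤ n := by
  induction l with
  | nil => simp [Formula.disjList, Formula.depth]
  | cons φ l ih =>
      simp only [Formula.disjList, Formula.depth, Formula.depth_neg, Nat.max_zero, sup_le_iff]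
      exact ⟨h φ (by simp), ih fun ψ hψ => h ψ (by simp [hψ])⟩

/-! ### Soundness of K -/

def Valid : Set Formula := {φ | ∀ (M : KripkeModel) (w : M.W), M.Sat φ w}

/-- The model realizing a substitution. -/
def KripkeModel.smap (M : KripkeModel) (σ : ℕ → Formula) : KripkeModel :=
  ⟨M.W, M.nonempty, M.rel, fun w p => M.Sat (σ p) w⟩

lemma sat_subst (M : KripkeModel) (σ : ℕ → Formula) (φ : Formula) :
    ∀ w : M.W, M.Sat (φ.subst σ) w ↔ (M.smap σ).Sat φ w := by
  induction φ with
  | var p => intro w; rfl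
  | bot => intro w; rfl
  | imp φ ψ ihφ ihψ =>
      intro w
      simp only [Formula.subst, KripkeModel.Sat]
      rw [ihφ w, ihψ w]
  | box φ ih =>
      intro w
      simp only [Formula.subst, KripkeModel.Sat]
      constructor
      · intro h x hx; exact (ih x).mp (h x hx)
      · intro h x hx; exact (ih x).mpr (h x hx)

lemma tautology_valid (φ : Formula) (h : Tautology φ) (M : KripkeModel) (w : M.W) :
    M.Sat φ w := by
  have := h (fun ψ => decide (M.Sat ψ w)) ?_ ?_
  · exact of_decide_eq_true this
  · exact decide_eq_false (by simp [KripkeModel.Sat])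
  · intro ψ θ
    by_cases h1 : M.Sat ψ w <;> by_cases h2 : M.Sat θ w <;>
      simp [KripkeModel.Sat, h1, h2]

lemma isNormal_Valid : IsNormal Valid := by
  constructor
  · exact fun φ h M w => tautology_valid φ h M w
  · intro M w
    simp only [KripkeModel.Sat]
    intro h1 h2 x hx
    exact h1 x hx (h2 x hx)
  · intro φ ψ h1 h2 M w
    have := h1 M w
    simp only [KripkeModel.Sat] at this
    exact this (h2 M w)
  · intro φ h M w
    intro x _
    exact h M x
  · intro φ h σ M w
    rw [sat_subst]
    exact h _ _

lemma soundK {φ : Formula} (h : φ ∈ TheoryK) (M : KripkeModel) (w : M.W) : M.Sat φ w :=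
  Set.mem_sInter.mp h Valid ⟨isNormal_Valid, Set.empty_subset _⟩ M w

lemma iff_sat {φ ψ : Formula} (h : Formula.iff φ ψ ∈ TheoryK) (M : KripkeModel) (w : M.W) :
    M.Sat φ w ↔ M.Sat ψ w := by
  have := soundK h M w
  rw [Formula.iff, KripkeModel.sat_and] at this
  obtain ⟨h1, h2⟩ := this
  simp only [KripkeModel.Sat] at h1 h2
  exact ⟨h1, h2⟩

/-! ### The layered transfer condition -/

/-- `Cond P Q M M' k x x'` : every (P,Q)-formula of modal depth ≤ k true at x is true at x'. -/
def Cond (P Q : Finset ℕ) (M M' : KripkeModel) (k : ℕ) (x : M.W) (x' : M'.W) : Prop :=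
  ∀ ψ : Formula, PQFormula P Q ψ → ψ.depth ≤ k → M.Sat ψ x → M'.Sat ψ x'

section Transfer

variable {F : ℕ → Finset ℕ → Finset ℕ → List Formula}

lemma th_imp_cond (hF : IsFamily F) {M M' : KripkeModel} {n : ℕ} {P Q : Finset ℕ}
    {x : M.W} {x' : M'.W} (h : Th F M n P Q x ⊆ Th F M' n P Q x') :
    Cond P Q M M' n x x' := by
  intro ψ hPQ hd hs
  obtain ⟨φ, hφ, hiff⟩ := (hF n P Q).2 ψ hPQ hd
  have e := iff_sat hiff
  have hmem : φ ∈ Th F M n P Q x := ⟨hφ, (e M x).mpr hs⟩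
  exact (e M' x').mp (h hmem).2

lemma cond_pos {P Q : Finset ℕ} {M M' : KripkeModel} {k : ℕ} {x : M.W} {x' : M'.W}
    (hc : Cond P Q M M' k x x') {p : ℕ} (hp : p ∈ P) (h : M.val x p) : M'.val x' p := by
  have := hc (.var p) ⟨by simp [Formula.vpos, Formula.vsgn, hp],
    by simp [Formula.vneg, Formula.vsgn]⟩ (by simp [Formula.depth]) h
  exact this

lemma cond_neg {P Q : Finset ℕ} {M M' : KripkeModel} {k : ℕ} {x : M.W} {x' : M'.W}
    (hc : Cond P Q M M' k x x') {p : ℕ} (hp : p ∈ Q) (h : M'.val x' p) : M.val x p := by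
  by_contra hn
  have := hc ((Formula.var p).neg) ⟨by simp [Formula.vpos, Formula.vsgn],
    by simp [Formula.vneg, Formula.vsgn, hp]⟩ (by simp [Formula.depth, Formula.neg]) ?_
  · rw [KripkeModel.sat_neg] at this
    exact this h
  · rw [KripkeModel.sat_neg]
    exact hn

lemma cond_forth (hF : IsFamily F) {P Q : Finset ℕ} {M M' : KripkeModel} {k : ℕ}
    {x : M.W} {x' : M'.W} (hc : Cond P Q M M' (k + 1) x x') {y : M.W} (hy : M.rel x y) :
    ∃ y', M'.rel x' y' ∧ Cond P Q M M' k y y' := by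
  set Δ := (F k P Q).filter (fun φ => decide (M.Sat φ y)) with hΔ
  have hdia : M.Sat (Formula.dia (conjList Δ)) x := by
    rw [KripkeModel.sat_dia]
    refine ⟨y, hy, (KripkeModel.sat_conjList M Δ y).mpr ?_⟩
    intro φ hφ
    exact of_decide_eq_true (List.mem_filter.mp hφ).2
  have hsub : ∀ φ ∈ Δ, PQFormula P Q φ ∧ φ.depth ≤ k :=
    fun φ hφ => (hF k P Q).1 φ (List.mem_of_mem_filter hφ)
  have hPQ : PQFormula P Q (Formula.dia (conjList Δ)) := by
    constructor
    · simp only [Formula.vpos, Formula.vsgn_dia]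
      exact vsgn_conjList_subset fun φ hφ => (hsub φ hφ).1.1
    · simp only [Formula.vneg, Formula.vsgn_dia]
      exact vsgn_conjList_subset fun φ hφ => (hsub φ hφ).1.2
  have hdep : (Formula.dia (conjList Δ)).depth ≤ k + 1 := by
    rw [Formula.depth_dia]
    exact Nat.succ_le_succ (depth_conjList_le fun φ hφ => (hsub φ hφ).2)
  have := hc _ hPQ hdep hdia
  rw [KripkeModel.sat_dia] at this
  obtain ⟨y', hrel, hsat⟩ := this
  refine ⟨y', hrel, ?_⟩
  intro ψ hψ hd hs
  obtain ⟨φ, hmem, hiff⟩ := (hF k P Q).2 ψ hψ hd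
  have hφΔ : φ ∈ Δ := List.mem_filter.mpr ⟨hmem, decide_eq_true ((iff_sat hiff M y).mpr hs)⟩
  exact (iff_sat hiff M' y').mp ((KripkeModel.sat_conjList M' Δ y').mp hsat φ hφΔ)

lemma cond_back (hF : IsFamily F) {P Q : Finset ℕ} {M M' : KripkeModel} {k : ℕ}
    {x : M.W} {x' : M'.W} (hc : Cond P Q M M' (k + 1) x x') {y' : M'.W}
    (hy' : M'.rel x' y') : ∃ y, M.rel x y ∧ Cond P Q M M' k y y' := by
  by_contra hcon
  push_neg at hcon
  set Γ := (F k P Q).filter (fun φ => decide (¬ M'.Sat φ y')) with hΓ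
  have hsub : ∀ φ ∈ Γ, PQFormula P Q φ ∧ φ.depth ≤ k :=
    fun φ hφ => (hF k P Q).1 φ (List.mem_of_mem_filter hφ)
  have hbox : M.Sat (Formula.box (Formula.disjList Γ)) x := by
    intro z hz
    have hz' := hcon z hz
    unfold Cond at hz'
    push_neg at hz'
    obtain ⟨ψ, hψPQ, hψd, hsz, hns⟩ := hz'
    obtain ⟨φ, hmem, hiff⟩ := (hF k P Q).2 ψ hψPQ hψd
    have hφΓ : φ ∈ Γ := List.mem_filter.mpr ⟨hmem,
      decide_eq_true (fun hs => hns ((iff_sat hiff M' y').mp hs))⟩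
    exact (KripkeModel.sat_disjList M Γ z).mpr ⟨φ, hφΓ, (iff_sat hiff M z).mpr hsz⟩
  have hPQ : PQFormula P Q (Formula.box (Formula.disjList Γ)) := by
    constructor
    · simp only [Formula.vpos, Formula.vsgn]
      exact vsgn_disjList_subset fun φ hφ => (hsub φ hφ).1.1
    · simp only [Formula.vneg, Formula.vsgn]
      exact vsgn_disjList_subset fun φ hφ => (hsub φ hφ).1.2
  have hdep : (Formula.box (Formula.disjList Γ)).depth ≤ k + 1 := by
    simp only [Formula.depth]
    exact Nat.succ_le_succ (depth_disjList_le fun φ hφ => (hsub φ hφ).2)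
  have hb' := hc _ hPQ hdep hbox y' hy'
  obtain ⟨φ, hφΓ, hsat⟩ := (KripkeModel.sat_disjList M' Γ y').mp hb'
  exact of_decide_eq_true (List.mem_filter.mp hφΓ).2 hsat

end Transfer

/-! ### The amalgamated model -/

section Amalg

variable (P1 P2 P3 Q1 Q2 Q3 : Finset ℕ) (M M' : KripkeModel)

/-- Worlds of the amalgamated model. -/
def AW : Type :=
  {t : ℕ × M.W × M'.W // Cond P2 Q2 M M' t.1 t.2.1 t.2.2} ⊕ M'.W

/-- Accessibility of the amalgamated model. -/
def ARel : AW P2 Q2 M M' → AW P2 Q2 M M' → Prop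
  | .inl a, .inl b => a.1.1 = b.1.1 + 1 ∧ M.rel a.1.2.1 b.1.2.1 ∧ M'.rel a.1.2.2 b.1.2.2
  | .inl a, .inr y' => a.1.1 = 0 ∧ M'.rel a.1.2.2 y'
  | .inr x', .inr y' => M'.rel x' y'
  | .inr _, .inl _ => False

/-- Valuation of the amalgamated model at paired worlds. -/
def AVal (x : M.W) (x' : M'.W) (p : ℕ) : Prop :=
  if p ∈ P1 then (M.val x p ∨ (p ∈ Q3 ∧ M'.val x' p))
  else if p ∈ Q1 then (M.val x p ∧ (p ∈ P3 → M'.val x' p))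
  else if p ∈ P2 then M'.val x' p
  else if p ∈ Q2 then (if p ∈ P3 then M'.val x' p else M.val x p)
  else M'.val x' p

/-- The amalgamated model. -/
def Amalg : KripkeModel :=
  ⟨AW P2 Q2 M M', ⟨Sum.inr M'.nonempty.some⟩, ARel P2 Q2 M M',
   fun a p => match a with
     | .inl t => AVal P1 P2 P3 Q1 Q2 Q3 M M' t.1.2.1 t.1.2.2 p
     | .inr x' => M'.val x' p⟩

end Amalg

section AmalgLemmas

variable {P1 P2 P3 Q1 Q2 Q3 : Finset ℕ} {M M' : KripkeModel}

lemma aval_fromM (d12 : Disjoint P1 P2) (d23 : Disjoint P2 P3)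
    {k : ℕ} {x : M.W} {x' : M'.W} (hc : Cond P2 Q2 M M' k x x')
    {p : ℕ} (hp : p ∈ P1 ∪ P2) (h : M.val x p) :
    AVal P1 P2 P3 Q1 Q2 Q3 M M' x x' p := by
  unfold AVal
  rcases Finset.mem_union.mp hp with h1 | h2
  · rw [if_pos h1]; exact Or.inl h
  · have hP1 : p ∉ P1 := Finset.disjoint_right.mp d12 h2
    have hP3 : p ∉ P3 := Finset.disjoint_left.mp d23 h2
    rw [if_neg hP1]
    by_cases hQ1 : p ∈ Q1
    · rw [if_pos hQ1]; exact ⟨h, fun h3 => absurd h3 hP3⟩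
    · rw [if_neg hQ1, if_pos h2]; exact cond_pos hc h2 h

lemma aval_toM (e12 : Disjoint Q1 Q2) (e13 : Disjoint Q1 Q3) (e23 : Disjoint Q2 Q3)
    {k : ℕ} {x : M.W} {x' : M'.W} (hc : Cond P2 Q2 M M' k x x')
    {p : ℕ} (hp : p ∈ Q1 ∪ Q2) (h : AVal P1 P2 P3 Q1 Q2 Q3 M M' x x' p) :
    M.val x p := by
  unfold AVal at h
  rcases Finset.mem_union.mp hp with h1 | h2
  · have hQ3 : p ∉ Q3 := Finset.disjoint_left.mp e13 h1
    by_cases hP1 : p ∈ P1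
    · rw [if_pos hP1] at h
      rcases h with h | ⟨h3, _⟩
      · exact h
      · exact absurd h3 hQ3
    · rw [if_neg hP1, if_pos h1] at h; exact h.1
  · have hQ1 : p ∉ Q1 := Finset.disjoint_right.mp e12 h2
    have hQ3 : p ∉ Q3 := Finset.disjoint_left.mp e23 h2
    by_cases hP1 : p ∈ P1
    · rw [if_pos hP1] at h
      rcases h with h | ⟨h3, _⟩
      · exact h
      · exact absurd h3 hQ3
    · rw [if_neg hP1, if_neg hQ1] at h
      by_cases hP2 : p ∈ P2
      · rw [if_pos hP2] at h; exact cond_neg hc h2 h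
      · rw [if_neg hP2, if_pos h2] at h
        by_cases hP3 : p ∈ P3
        · rw [if_pos hP3] at h; exact cond_neg hc h2 h
        · rw [if_neg hP3] at h; exact h

lemma aval_toM' (d12 : Disjoint P1 P2) (d13 : Disjoint P1 P3) (d23 : Disjoint P2 P3)
    {k : ℕ} {x : M.W} {x' : M'.W} (hc : Cond P2 Q2 M M' k x x')
    {p : ℕ} (hp : p ∈ P2 ∪ P3) (h : AVal P1 P2 P3 Q1 Q2 Q3 M M' x x' p) :
    M'.val x' p := by
  unfold AVal at h
  by_cases hP2 : p ∈ P2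
  · have hP1 : p ∉ P1 := Finset.disjoint_right.mp d12 hP2
    rw [if_neg hP1] at h
    by_cases hQ1 : p ∈ Q1
    · rw [if_pos hQ1] at h; exact cond_pos hc hP2 h.1
    · rw [if_neg hQ1, if_pos hP2] at h; exact h
  · have hP3 : p ∈ P3 := by
      rcases Finset.mem_union.mp hp with h2 | h3
      · exact absurd h2 hP2
      · exact h3
    have hP1 : p ∉ P1 := Finset.disjoint_right.mp d13 hP3
    rw [if_neg hP1] at h
    by_cases hQ1 : p ∈ Q1
    · rw [if_pos hQ1] at h; exact h.2 hP3
    · rw [if_neg hQ1, if_neg hP2] at h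
      by_cases hQ2 : p ∈ Q2
      · rw [if_pos hQ2, if_pos hP3] at h; exact h
      · rw [if_neg hQ2] at h; exact h

lemma aval_fromM' (e12 : Disjoint Q1 Q2) (e13 : Disjoint Q1 Q3) (e23 : Disjoint Q2 Q3)
    {k : ℕ} {x : M.W} {x' : M'.W} (hc : Cond P2 Q2 M M' k x x')
    {p : ℕ} (hp : p ∈ Q2 ∪ Q3) (h : M'.val x' p) :
    AVal P1 P2 P3 Q1 Q2 Q3 M M' x x' p := by
  unfold AVal
  by_cases hQ2 : p ∈ Q2
  · have hQ1 : p ∉ Q1 := Finset.disjoint_right.mp e12 hQ2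
    by_cases hP1 : p ∈ P1
    · rw [if_pos hP1]; exact Or.inl (cond_neg hc hQ2 h)
    · rw [if_neg hP1, if_neg hQ1]
      by_cases hP2 : p ∈ P2
      · rw [if_pos hP2]; exact h
      · rw [if_neg hP2, if_pos hQ2]
        by_cases hP3 : p ∈ P3
        · rw [if_pos hP3]; exact h
        · rw [if_neg hP3]; exact cond_neg hc hQ2 h
  · have hQ3 : p ∈ Q3 := by
      rcases Finset.mem_union.mp hp with h2 | h3
      · exact absurd h2 hQ2
      · exact h3
    have hQ1 : p ∉ Q1 := Finset.disjoint_right.mp e13 hQ3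
    by_cases hP1 : p ∈ P1
    · rw [if_pos hP1]; exact Or.inr ⟨hQ3, h⟩
    · rw [if_neg hP1, if_neg hQ1]
      by_cases hP2 : p ∈ P2
      · rw [if_pos hP2]; exact h
      · rw [if_neg hP2, if_neg hQ2]; exact h

lemma sat_inr : ∀ (φ : Formula) (y' : M'.W),
    (Amalg P1 P2 P3 Q1 Q2 Q3 M M').Sat φ (Sum.inr y') ↔ M'.Sat φ y' := by
  intro φ
  induction φ with
  | var p => intro y'; exact Iff.rfl
  | bot => intro y'; exact Iff.rfl
  | imp ψ θ ihψ ihθ =>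
      intro y'
      simp only [KripkeModel.Sat]
      rw [ihψ, ihθ]
  | box ψ ih =>
      intro y'
      simp only [KripkeModel.Sat]
      constructor
      · intro h z' hz'
        exact (ih z').mp (h (Sum.inr z') hz')
      · intro h b hb
        cases b with
        | inl a => exact (hb : False).elim
        | inr z' => exact (ih z').mpr (h z' hb)

variable {F : ℕ → Finset ℕ → Finset ℕ → List Formula}

lemma claim1 (hF : IsFamily F) (d12 : Disjoint P1 P2) (d23 : Disjoint P2 P3)
    (e12 : Disjoint Q1 Q2) (e13 : Disjoint Q1 Q3) (e23 : Disjoint Q2 Q3) :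
    ∀ (φ : Formula) (k : ℕ) (x : M.W) (x' : M'.W) (hc : Cond P2 Q2 M M' k x x'),
      ((φ.vsgn true ⊆ P1 ∪ P2) → (φ.vsgn false ⊆ Q1 ∪ Q2) → φ.depth ≤ k →
        M.Sat φ x → (Amalg P1 P2 P3 Q1 Q2 Q3 M M').Sat φ (Sum.inl ⟨(k, x, x'), hc⟩)) ∧
      ((φ.vsgn false ⊆ P1 ∪ P2) → (φ.vsgn true ⊆ Q1 ∪ Q2) → φ.depth ≤ k →
        (Amalg P1 P2 P3 Q1 Q2 Q3 M M').Sat φ (Sum.inl ⟨(k, x, x'), hc⟩) → M.Sat φ x) := by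
  intro φ
  induction φ with
  | var p =>
      intro k x x' hc
      constructor
      · intro h1 _ _ hs
        exact aval_fromM d12 d23 hc (h1 (by simp [Formula.vsgn])) hs
      · intro _ h2 _ hs
        exact aval_toM e12 e13 e23 hc (h2 (by simp [Formula.vsgn])) hs
  | bot =>
      intro k x x' hc
      exact ⟨fun _ _ _ hs => (hs : False).elim, fun _ _ _ hs => (hs : False).elim⟩
  | imp ψ θ ihψ ihθ =>
      intro k x x' hc
      constructor
      · intro h1 h2 hd hs
        simp only [Formula.vsgn, Finset.union_subset_iff] at h1 h2
        simp only [Formula.depth, max_le_iff] at hd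
        simp only [KripkeModel.Sat] at hs ⊢
        intro hψs
        exact (ihθ k x x' hc).1 h1.2 h2.2 hd.2 (hs ((ihψ k x x' hc).2 h1.1 h2.1 hd.1 hψs))
      · intro h1 h2 hd hs
        simp only [Formula.vsgn, Finset.union_subset_iff] at h1 h2
        simp only [Formula.depth, max_le_iff] at hd
        simp only [KripkeModel.Sat] at hs ⊢
        intro hψx
        exact (ihθ k x x' hc).2 h1.2 h2.2 hd.2 (hs ((ihψ k x x' hc).1 h1.1 h2.1 hd.1 hψx))
  | box ψ ih =>
      intro k x x' hc
      constructor
      · intro h1 h2 hd hs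
        simp only [Formula.vsgn] at h1 h2
        simp only [Formula.depth] at hd
        simp only [KripkeModel.Sat] at hs ⊢
        rintro (⟨⟨j, y, y'⟩, hcy⟩ | y') hrel
        · obtain ⟨hk, hxy, _⟩ := hrel
          have hk' : k = j + 1 := hk
          exact (ih j y y' hcy).1 h1 h2 (by omega) (hs y hxy)
        · have hk0 : k = 0 := hrel.1
          exact absurd hk0 (by omega)
      · intro h1 h2 hd hs
        simp only [Formula.vsgn] at h1 h2
        simp only [Formula.depth] at hd
        simp only [KripkeModel.Sat] at hs ⊢
        intro y hxy
        obtain ⟨k', rfl⟩ : ∃ k', k = k' + 1 := ⟨k - 1, by omega⟩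
        obtain ⟨y', hrel', hcy⟩ := cond_forth hF hc hxy
        exact (ih k' y y' hcy).2 h1 h2 (by omega)
          (hs (Sum.inl ⟨(k', y, y'), hcy⟩) ⟨rfl, hxy, hrel'⟩)

lemma claim2 (hF : IsFamily F) (d12 : Disjoint P1 P2) (d13 : Disjoint P1 P3)
    (d23 : Disjoint P2 P3) (e12 : Disjoint Q1 Q2) (e13 : Disjoint Q1 Q3)
    (e23 : Disjoint Q2 Q3) :
    ∀ (ψ : Formula) (k : ℕ) (x : M.W) (x' : M'.W) (hc : Cond P2 Q2 M M' k x x'),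
      ((ψ.vsgn true ⊆ P2 ∪ P3) → (ψ.vsgn false ⊆ Q2 ∪ Q3) →
        (Amalg P1 P2 P3 Q1 Q2 Q3 M M').Sat ψ (Sum.inl ⟨(k, x, x'), hc⟩) → M'.Sat ψ x') ∧
      ((ψ.vsgn false ⊆ P2 ∪ P3) → (ψ.vsgn true ⊆ Q2 ∪ Q3) →
        M'.Sat ψ x' → (Amalg P1 P2 P3 Q1 Q2 Q3 M M').Sat ψ (Sum.inl ⟨(k, x, x'), hc⟩)) := by
  intro ψ
  induction ψ with
  | var p =>
      intro k x x' hc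
      constructor
      · intro h1 _ hs
        exact aval_toM' d12 d13 d23 hc (h1 (by simp [Formula.vsgn])) hs
      · intro _ h2 hs
        exact aval_fromM' e12 e13 e23 hc (h2 (by simp [Formula.vsgn])) hs
  | bot =>
      intro k x x' hc
      exact ⟨fun _ _ hs => (hs : False).elim, fun _ _ hs => (hs : False).elim⟩
  | imp ψ θ ihψ ihθ =>
      intro k x x' hc
      constructor
      · intro h1 h2 hs
        simp only [Formula.vsgn, Finset.union_subset_iff] at h1 h2
        simp only [KripkeModel.Sat] at hs ⊢
        intro hψs
        exact (ihθ k x x' hc).1 h1.2 h2.2 (hs ((ihψ k x x' hc).2 h1.1 h2.1 hψs))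
      · intro h1 h2 hs
        simp only [Formula.vsgn, Finset.union_subset_iff] at h1 h2
        simp only [KripkeModel.Sat] at hs ⊢
        intro hψs
        exact (ihθ k x x' hc).2 h1.2 h2.2 (hs ((ihψ k x x' hc).1 h1.1 h2.1 hψs))
  | box ψ ih =>
      intro k x x' hc
      constructor
      · intro h1 h2 hs
        simp only [Formula.vsgn] at h1 h2
        simp only [KripkeModel.Sat] at hs ⊢
        intro y' hy'
        cases k with
        | zero =>
            exact (sat_inr ψ y').mp (hs (Sum.inr y') ⟨rfl, hy'⟩)
        | succ j =>
            obtain ⟨y, hxy, hcy⟩ := cond_back hF hc hy'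
            exact (ih j y y' hcy).1 h1 h2 (hs (Sum.inl ⟨(j, y, y'), hcy⟩) ⟨rfl, hxy, hy'⟩)
      · intro h1 h2 hs
        simp only [Formula.vsgn] at h1 h2
        simp only [KripkeModel.Sat] at hs ⊢
        rintro (⟨⟨j, y, y'⟩, hcy⟩ | z') hrel
        · exact (ih j y y' hcy).2 h1 h2 (hs y' hrel.2.2)
        · exact (sat_inr ψ z').mpr (hs z' hrel.2)

end AmalgLemmas

/-- The class of all Kripke models has ULIP. -/
theorem classULIP_all (F : ℕ → Finset ℕ → Finset ℕ → List Formula) (hF : IsFamily F) :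
    ClassULIP F Set.univ := by
  intro P1 P2 P3 Q1 Q2 Q3 d12 d13 d23 e12 e13 e23 M _ M' _ w w' m n hTh
  have hc : Cond P2 Q2 M M' n w w' := th_imp_cond hF hTh
  refine ⟨Amalg P1 P2 P3 Q1 Q2 Q3 M M', trivial, Sum.inl ⟨(n, w, w'), hc⟩, ?_, ?_⟩
  · rintro φ ⟨hmem, hsat⟩
    obtain ⟨⟨hpos, hneg⟩, hdep⟩ := (hF n (P1 ∪ P2) (Q1 ∪ Q2)).1 φ hmem
    exact ⟨hmem, (claim1 hF d12 d23 e12 e13 e23 φ n w w' hc).1 hpos hneg hdep hsat⟩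
  · rintro ψ ⟨hmem, hsat⟩
    obtain ⟨⟨hpos, hneg⟩, _⟩ := (hF m (P2 ∪ P3) (Q2 ∪ Q3)).1 ψ hmem
    exact ⟨hmem, (claim2 hF d12 d13 d23 e12 e13 e23 ψ n w w' hc).1 hpos hneg hsat⟩
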